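/- Let B₁, …, B_n be independent standard Brownian motions on [0,1] started at 0, and let 𝒞_Q = {C_{t,y} : t, y ∈ ℚ, 0 ≤ t ≤ 1} where C_{t,y} = {z ∈ C[0,1] : z(t) ≤ y}. Then with probability one, the class 𝒞_Q shatters {B₁, …, B_n}, i.e. card{C ∩ {B₁,…,B_n} : C ∈ 𝒞_Q} = 2^n. -/

import Mathlib

open MeasureTheory ProbabilityTheory Set Filter Real
open scoped ENNReal NNReal Topology
set_option maxHeartbeats 1000000



lemma integral_id_mul_exp_Ioi {v : ℝ} (hv : 0 < v) (a : ℝ) :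
    ∫ x in Ioi a, x * rexp (-x ^ 2 / (2 * v)) = v * rexp (-a ^ 2 / (2 * v)) := by
  have hb : 0 < (2 * v)⁻¹ := by positivity
  have hder : ∀ x ∈ Ici a, HasDerivAt (fun x : ℝ => -v * rexp (-x ^ 2 / (2 * v)))
      (x * rexp (-x ^ 2 / (2 * v))) x := by
    intro x _
    have h1 : HasDerivAt (fun x : ℝ => -x ^ 2 / (2 * v)) (-(2 * x) / (2 * v)) x := by
      have := ((hasDerivAt_pow 2 x).neg).div_const (2 * v)
      simpa using this
    have h2 := (h1.exp).const_mul (-v)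
    refine h2.congr_deriv ?_
    have hvv : v * v⁻¹ = 1 := mul_inv_cancel₀ hv.ne'
    linear_combination (x * rexp (-x ^ 2 / (2 * v))) * hvv
  have hint : IntegrableOn (fun x : ℝ => x * rexp (-x ^ 2 / (2 * v))) (Ioi a) := by
    have : Integrable (fun x : ℝ => x * rexp (-(2 * v)⁻¹ * x ^ 2)) := by
      have h := integrable_rpow_mul_exp_neg_mul_sq hb (s := 1) (by norm_num)
      simpa [Real.rpow_one] using h
    have heq : (fun x : ℝ => x * rexp (-x ^ 2 / (2 * v)))
        = fun x : ℝ => x * rexp (-(2 * v)⁻¹ * x ^ 2) := by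
      funext x; congr 1; field_simp
    rw [heq]
    exact this.integrableOn
  have hlim : Tendsto (fun x : ℝ => -v * rexp (-x ^ 2 / (2 * v))) atTop (𝓝 0) := by
    rw [show (0:ℝ) = -v * 0 by ring]
    refine Tendsto.const_mul _ ?_
    refine Real.tendsto_exp_atBot.comp ?_
    have : Tendsto (fun x : ℝ => x ^ 2) atTop atTop := tendsto_pow_atTop (by norm_num)
    apply Tendsto.atBot_div_const (by positivity)
    exact tendsto_neg_atBot_iff.mpr this
  have := integral_Ioi_of_hasDerivAt_of_tendsto' hder hint hlim
  rw [this]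
  ring

lemma gauss_Ici_le {v : ℝ≥0} (hv : v ≠ 0) {a : ℝ} (ha : Real.sqrt v ≤ a) :
    gaussianReal 0 v (Ici a) ≤ ENNReal.ofReal (rexp (-a ^ 2 / (2 * v))) := by
  have hv0 : (0:ℝ) < v := by positivity
  have ha0 : 0 < a := lt_of_lt_of_le (Real.sqrt_pos.2 hv0) ha
  rw [gaussianReal_apply_eq_integral 0 hv]
  refine ENNReal.ofReal_le_ofReal ?_
  have hxa : ∀ x ∈ Ici a, gaussianPDFReal 0 v x ≤ (x / a) * gaussianPDFReal 0 v x := by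
    intro x hx
    have h1 : (1:ℝ) ≤ x / a := (one_le_div ha0).mpr hx
    nth_rewrite 1 [← one_mul (gaussianPDFReal 0 v x)]
    exact mul_le_mul_of_nonneg_right h1 (gaussianPDFReal_nonneg 0 v x)
  have hint2 : IntegrableOn (fun x => (x / a) * gaussianPDFReal 0 v x) (Ici a) := by
    have : IntegrableOn (fun x : ℝ => x * rexp (-x ^ 2 / (2 * v))) (Ici a) := by
      have : Integrable (fun x : ℝ => x * rexp (-(2 * (v:ℝ))⁻¹ * x ^ 2)) := by
        have h := integrable_rpow_mul_exp_neg_mul_sq (by positivity : (0:ℝ) < (2 * (v:ℝ))⁻¹)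
          (s := 1) (by norm_num)
        simpa [Real.rpow_one] using h
      have heq : (fun x : ℝ => x * rexp (-x ^ 2 / (2 * (v:ℝ))))
          = fun x : ℝ => x * rexp (-(2 * (v:ℝ))⁻¹ * x ^ 2) := by
        funext x; congr 1; field_simp
      rw [heq]; exact this.integrableOn
    have heq : (fun x => (x / a) * gaussianPDFReal 0 v x)
        = fun x => (a⁻¹ * (Real.sqrt (2 * π * v))⁻¹) * (x * rexp (-x ^ 2 / (2 * v))) := by
      funext x; simp only [gaussianPDFReal, sub_zero]; ring
    rw [heq]
    exact this.const_mul _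
  have step1 : ∫ x in Ici a, gaussianPDFReal 0 v x
      ≤ ∫ x in Ici a, (x / a) * gaussianPDFReal 0 v x := by
    refine setIntegral_mono_on (integrable_gaussianPDFReal 0 v).integrableOn hint2
      measurableSet_Ici hxa
  have step2 : ∫ x in Ici a, (x / a) * gaussianPDFReal 0 v x
      = (a⁻¹ * (Real.sqrt (2 * π * v))⁻¹) * (v * rexp (-a ^ 2 / (2 * v))) := by
    have heq : (fun x => (x / a) * gaussianPDFReal 0 v x)
        = fun x => (a⁻¹ * (Real.sqrt (2 * π * v))⁻¹) * (x * rexp (-x ^ 2 / (2 * v))) := by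
      funext x; simp only [gaussianPDFReal, sub_zero]; ring
    rw [heq, integral_const_mul, integral_Ici_eq_integral_Ioi,
      integral_id_mul_exp_Ioi hv0 a]
  have hcoef : a⁻¹ * (Real.sqrt (2 * π * v))⁻¹ * v ≤ 1 := by
    rw [← mul_inv]
    refine inv_mul_le_one_of_le₀ ?_ (by positivity)
    calc (v:ℝ) = Real.sqrt v * Real.sqrt v := (Real.mul_self_sqrt hv0.le).symm
    _ ≤ a * Real.sqrt (2 * π * v) := by
        refine mul_le_mul ha ?_ (Real.sqrt_nonneg _) ha0.le
        refine Real.sqrt_le_sqrt ?_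
        nlinarith [Real.pi_gt_three, hv0]
  calc ∫ x in Ici a, gaussianPDFReal 0 v x
      ≤ (a⁻¹ * (Real.sqrt (2 * π * v))⁻¹) * (v * rexp (-a ^ 2 / (2 * v))) :=
        step1.trans (le_of_eq step2)
    _ = (a⁻¹ * (Real.sqrt (2 * π * v))⁻¹ * v) * rexp (-a ^ 2 / (2 * v)) := by ring
    _ ≤ 1 * rexp (-a ^ 2 / (2 * v)) :=
        mul_le_mul_of_nonneg_right hcoef (Real.exp_nonneg _)
    _ = _ := one_mul _

lemma gauss_Ioi_ge {v : ℝ≥0} (hv : v ≠ 0) {a : ℝ} (ha : 0 ≤ a) :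
    ENNReal.ofReal ((Real.sqrt (2 * π))⁻¹
        * rexp (-(a + Real.sqrt v) ^ 2 / (2 * v))) ≤ gaussianReal 0 v (Ioi a) := by
  have hv0 : (0:ℝ) < v := by positivity
  have hsv : 0 < Real.sqrt v := Real.sqrt_pos.2 hv0
  rw [gaussianReal_apply_eq_integral 0 hv]
  refine ENNReal.ofReal_le_ofReal ?_
  have hsub : ∫ x in Ioc a (a + Real.sqrt v), gaussianPDFReal 0 v x
      ≤ ∫ x in Ioi a, gaussianPDFReal 0 v x := by
    refine setIntegral_mono_set (integrable_gaussianPDFReal 0 v).integrableOn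
      (ae_of_all _ fun x => gaussianPDFReal_nonneg 0 v x)
      (HasSubset.Subset.eventuallyLE Ioc_subset_Ioi_self)
  refine le_trans ?_ hsub
  have hlow : ∀ x ∈ Ioc a (a + Real.sqrt v),
      gaussianPDFReal 0 v (a + Real.sqrt v) ≤ gaussianPDFReal 0 v x := by
    intro x hx
    simp only [gaussianPDFReal, sub_zero]
    refine mul_le_mul_of_nonneg_left ?_ (by positivity)
    refine Real.exp_le_exp.2 ?_
    have hx2 : x ^ 2 ≤ (a + Real.sqrt v) ^ 2 := by nlinarith [hx.1, hx.2]
    have h2v : (0:ℝ) < 2 * v := by positivity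
    calc -(a + Real.sqrt v) ^ 2 / (2 * (v:ℝ)) ≤ -x ^ 2 / (2 * (v:ℝ)) := by
          apply div_le_div_of_nonneg_right ?_ h2v.le |>.trans_eq rfl
          · linarith
      _ = _ := rfl
  have hconst : (Real.sqrt (2 * π))⁻¹ * rexp (-(a + Real.sqrt v) ^ 2 / (2 * v))
      = ∫ _x in Ioc a (a + Real.sqrt v), gaussianPDFReal 0 v (a + Real.sqrt v) := by
    rw [setIntegral_const]
    rw [measureReal_def, Real.volume_Ioc]
    have : a + Real.sqrt v - a = Real.sqrt v := by ring
    rw [this, ENNReal.toReal_ofReal hsv.le]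
    simp only [gaussianPDFReal, sub_zero, smul_eq_mul]
    have hsqrt : Real.sqrt (2 * π * v) = Real.sqrt (2 * π) * Real.sqrt v :=
      Real.sqrt_mul (by positivity) _
    rw [hsqrt, mul_inv]
    rw [show Real.sqrt v * ((Real.sqrt (2*π))⁻¹ * (Real.sqrt v)⁻¹ * rexp (-(a + Real.sqrt v) ^ 2 / (2 * v)))
      = (Real.sqrt v * (Real.sqrt v)⁻¹) * ((Real.sqrt (2*π))⁻¹ * rexp (-(a + Real.sqrt v) ^ 2 / (2 * v))) by ring]
    rw [mul_inv_cancel₀ hsv.ne', one_mul]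
  rw [hconst]
  refine setIntegral_mono_on ?_ (integrable_gaussianPDFReal 0 v).integrableOn
    measurableSet_Ioc hlow
  exact integrableOn_const (by rw [Real.volume_Ioc]; exact ENNReal.ofReal_ne_top)


lemma bc2_pairwise {Ω : Type*} [MeasurableSpace Ω] (P : Measure Ω) [IsProbabilityMeasure P]
    {A : ℕ → Set Ω} (hA : ∀ k, MeasurableSet (A k))
    (hind : Pairwise fun k l =>
      IndepFun ((A k).indicator (fun _ => (1:ℝ))) ((A l).indicator fun _ => (1:ℝ)) P)
    (hsum : (∑' k, P (A k)) = ∞) :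
    P (Filter.limsup A Filter.atTop) = 1 := by
  have key : ∀ m : ℕ, P ((⋃ k, A (k + m))ᶜ) = 0 := by
    intro m
    -- tail sum is infinite
    have htail : (∑' k, P (A (k + m))) = ∞ := by
      induction m with
      | zero => simpa using hsum
      | succ m ih =>
        have h1 := ENNReal.tsum_add_one_eq_top (f := fun k => P (A (k + m))) ih
          (measure_ne_top _ _)
        have h2 : (fun n : ℕ => P (A (n + 1 + m))) = fun n : ℕ => P (A (n + (m + 1))) := by
          funext n; rw [show n + 1 + m = n + (m + 1) from by omega]
        rwa [h2] at h1
    set X : ℕ → Ω → ℝ := fun k => (A (k + m)).indicator (fun _ => (1:ℝ)) with hX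
    have hXmeas : ∀ k, MemLp (X k) 2 P := fun k =>
      memLp_indicator_const 2 (hA (k + m)) 1 (Or.inr (measure_ne_top _ _))
    have hXint : ∀ k, Integrable (X k) P := fun k => (hXmeas k).integrable one_le_two
    have hXexp : ∀ k, P[X k] = (P (A (k + m))).toReal := by
      intro k
      rw [hX]
      simp only []
      rw [integral_indicator_const _ (hA (k + m))]
      simp [measureReal_def]
    have hXvar : ∀ k, variance (X k) P ≤ (P (A (k + m))).toReal := by
      intro k
      rw [variance_eq_sub (hXmeas k)]
      have hsq : (X k) ^ 2 = X k := by
        funext ω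
        by_cases hω : ω ∈ A (k + m) <;> simp [hX, Set.indicator_apply, hω]
      rw [hsq, hXexp k]
      nlinarith [sq_nonneg ((P (A (k + m))).toReal), ENNReal.toReal_nonneg (a := P (A (k+m)))]
    -- main estimate for each K
    have main : ∀ K : ℕ, 0 < ∑ k ∈ Finset.range K, (P (A (k + m))).toReal →
        P ((⋃ k, A (k + m))ᶜ) ≤
          ENNReal.ofReal (1 / ∑ k ∈ Finset.range K, (P (A (k + m))).toReal) := by
      intro K hM
      set M : ℝ := ∑ k ∈ Finset.range K, (P (A (k + m))).toReal with hMdef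
      set N : Ω → ℝ := fun ω => ∑ k ∈ Finset.range K, X k ω with hN
      have hNfun : N = ∑ k ∈ Finset.range K, X k := by
        funext ω; simp [hN]
      have hNmem : MemLp N 2 P := by
        rw [hNfun]; exact memLp_finset_sum' _ fun k _ => hXmeas k
      have hNexp : P[N] = M := by
        rw [hN]
        rw [integral_finset_sum _ fun k _ => hXint k]
        exact Finset.sum_congr rfl fun k _ => hXexp k
      have hNvar : variance N P ≤ M := by
        rw [hNfun]
        rw [IndepFun.variance_sum (fun k _ => hXmeas k) ?pair]
        case pair =>
          intro k hk l hl hkl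
          exact hind (by omega : k + m ≠ l + m)
        exact Finset.sum_le_sum fun k _ => hXvar k
      have hsubset : (⋃ k, A (k + m))ᶜ ⊆ {ω | M ≤ |N ω - P[N]|} := by
        intro ω hω
        simp only [Set.mem_compl_iff, Set.mem_iUnion, not_exists] at hω
        have hNω : N ω = 0 := by
          rw [hN]
          refine Finset.sum_eq_zero fun k _ => ?_
          simp [hX, Set.indicator_apply, hω (k)]
        simp only [Set.mem_setOf_eq, hNω, hNexp, zero_sub, abs_neg]
        exact le_abs_self M
      calc P ((⋃ k, A (k + m))ᶜ) ≤ P {ω | M ≤ |N ω - P[N]|} := measure_mono hsubset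
        _ ≤ ENNReal.ofReal (variance N P / M ^ 2) := meas_ge_le_variance_div_sq hNmem hM
        _ ≤ ENNReal.ofReal (1 / M) := by
            refine ENNReal.ofReal_le_ofReal ?_
            rw [div_le_div_iff₀ (by positivity) hM]
            nlinarith [hNvar]
    -- the partial sums tend to infinity
    have htends : Tendsto (fun K => ∑ k ∈ Finset.range K, P (A (k + m))) atTop (𝓝 ∞) := by
      rw [← htail]
      exact ENNReal.tendsto_nat_tsum _
    have hgrow : ∀ b : ℝ, 0 < b → ∃ K, b ≤ ∑ k ∈ Finset.range K, (P (A (k + m))).toReal := by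
      intro b hb
      have : ∀ᶠ K in atTop, ENNReal.ofReal b < ∑ k ∈ Finset.range K, P (A (k + m)) :=
        htends.eventually (lt_mem_nhds (ENNReal.ofReal_lt_top))
      obtain ⟨K, hK⟩ := this.exists
      refine ⟨K, ?_⟩
      have hfin : (∑ k ∈ Finset.range K, P (A (k + m))) ≠ ∞ :=
        (ENNReal.sum_lt_top.2 fun i _ => measure_lt_top _ _).ne
      have := (ENNReal.ofReal_le_iff_le_toReal hfin).1 hK.le
      rwa [ENNReal.toReal_sum (fun i _ => measure_ne_top _ _)] at this
    have hle : ∀ j : ℕ, P ((⋃ k, A (k + m))ᶜ) ≤ ENNReal.ofReal (1 / (j + 1 : ℝ)) := by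
      intro j
      obtain ⟨K, hK⟩ := hgrow (j + 1 : ℝ) (by positivity)
      have hM : 0 < ∑ k ∈ Finset.range K, (P (A (k + m))).toReal := by
        have : (0:ℝ) < (j+1:ℝ) := by positivity
        linarith
      refine (main K hM).trans (ENNReal.ofReal_le_ofReal ?_)
      exact one_div_le_one_div_of_le (by positivity) hK
    have htend0 : Tendsto (fun j : ℕ => ENNReal.ofReal (1 / (j + 1 : ℝ))) atTop (𝓝 0) := by
      rw [show (0:ℝ≥0∞) = ENNReal.ofReal 0 by simp]
      exact ENNReal.tendsto_ofReal tendsto_one_div_add_atTop_nhds_zero_nat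
    exact le_antisymm (ge_of_tendsto' htend0 fun j => hle j) (by simp)
  -- conclude
  have hlimsup : Filter.limsup A Filter.atTop = ⋂ m, ⋃ k, A (k + m) := by
    rw [limsup_eq_iInf_iSup_of_nat']
    simp only [Set.iInf_eq_iInter, Set.iSup_eq_iUnion]
  rw [hlimsup]
  rw [← compl_compl (⋂ m, ⋃ k, A (k + m)), measure_compl ?_ (measure_ne_top _ _)]
  · rw [Set.compl_iInter]
    have : P (⋃ m, (⋃ k, A (k + m))ᶜ) = 0 := measure_iUnion_null fun m => key m
    rw [this]
    simp
  · exact (MeasurableSet.iInter fun m => MeasurableSet.iUnion fun k => hA _).compl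


lemma indepFun_indicator_of_indepSet {Ω : Type*} [MeasurableSpace Ω] {P : Measure Ω}
    {A B : Set Ω} (h : IndepSet A B P) :
    IndepFun (A.indicator (fun _ => (1:ℝ))) (B.indicator fun _ => (1:ℝ)) P := by
  have h' : Indep (MeasurableSpace.generateFrom {A}) (MeasurableSpace.generateFrom {B}) P := h
  have hfA : Measurable[MeasurableSpace.generateFrom {A}] (A.indicator (fun _ => (1:ℝ))) :=
    measurable_const.indicator (MeasurableSpace.measurableSet_generateFrom rfl)
  have hfB : Measurable[MeasurableSpace.generateFrom {B}] (B.indicator (fun _ => (1:ℝ))) :=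
    measurable_const.indicator (MeasurableSpace.measurableSet_generateFrom rfl)
  exact indep_of_indep_of_le_right (indep_of_indep_of_le_left h' hfA.comap_le) hfB.comap_le

lemma indepFun_indicator_inter {Ω : Type*} [MeasurableSpace Ω] (P : Measure Ω)
    [IsProbabilityMeasure P] {n : ℕ}
    {Y Z : Fin n → Ω → ℝ} (hY : ∀ i, Measurable (Y i)) (hZ : ∀ i, Measurable (Z i))
    (hpairs : iIndepFun
      (fun i ω => (Y i ω, Z i ω)) P)
    (hYZ : ∀ i, IndepFun (Y i) (Z i) P) (r r' : ℝ) :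
    IndepFun ((⋂ i, Y i ⁻¹' Ioi r).indicator (fun _ => (1:ℝ)))
             ((⋂ i, Z i ⁻¹' Ioi r').indicator (fun _ => (1:ℝ))) P := by
  refine indepFun_indicator_of_indepSet ?_
  rw [indepSet_iff_measure_inter_eq_mul
    (MeasurableSet.iInter fun i => (hY i) measurableSet_Ioi)
    (MeasurableSet.iInter fun i => (hZ i) measurableSet_Ioi) P]
  have hYind : iIndepFun Y P := by
    have := hpairs.comp (fun _ => Prod.fst) (fun _ => measurable_fst)
    exact this
  have hZind : iIndepFun Z P := by
    have := hpairs.comp (fun _ => Prod.snd) (fun _ => measurable_snd)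
    exact this
  have hjoint : P ((⋂ i, Y i ⁻¹' Ioi r) ∩ ⋂ i, Z i ⁻¹' Ioi r')
      = ∏ i : Fin n, P (Y i ⁻¹' Ioi r ∩ Z i ⁻¹' Ioi r') := by
    have hsets : ∀ i : Fin n, (i ∈ Finset.univ) →
        MeasurableSet ((Ioi r ×ˢ Ioi r' : Set (ℝ × ℝ))) := fun i _ =>
      measurableSet_Ioi.prod measurableSet_Ioi
    have h := hpairs.measure_inter_preimage_eq_mul Finset.univ
      (sets := fun _ => (Ioi r ×ˢ Ioi r' : Set (ℝ × ℝ))) hsets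
    have hpre : ∀ i : Fin n, (fun ω => (Y i ω, Z i ω)) ⁻¹' (Ioi r ×ˢ Ioi r')
        = Y i ⁻¹' Ioi r ∩ Z i ⁻¹' Ioi r' := by
      intro i; ext ω; simp [Set.mem_prod]
    simp only [hpre] at h
    rw [← h]
    congr 1
    rw [← Set.iInter_inter_distrib]
    simp
  have hY' : P (⋂ i, Y i ⁻¹' Ioi r) = ∏ i : Fin n, P (Y i ⁻¹' Ioi r) := by
    have h := hYind.measure_inter_preimage_eq_mul Finset.univ
      (sets := fun _ => (Ioi r : Set ℝ)) (fun i _ => measurableSet_Ioi)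
    rw [← h]; congr 1; simp
  have hZ' : P (⋂ i, Z i ⁻¹' Ioi r') = ∏ i : Fin n, P (Z i ⁻¹' Ioi r') := by
    have h := hZind.measure_inter_preimage_eq_mul Finset.univ
      (sets := fun _ => (Ioi r' : Set ℝ)) (fun i _ => measurableSet_Ioi)
    rw [← h]; congr 1; simp
  rw [hjoint, hY', hZ', ← Finset.prod_mul_distrib]
  exact Finset.prod_congr rfl fun i _ => (hYZ i).measure_inter_preimage_eq_mul _ _
    measurableSet_Ioi measurableSet_Ioi

lemma gauss_abs_le {v : ℝ≥0} (hv : v ≠ 0) {a : ℝ} (ha : Real.sqrt v ≤ a) :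
    gaussianReal 0 v {x | a ≤ |x|} ≤ 2 * ENNReal.ofReal (rexp (-a ^ 2 / (2 * v))) := by
  have hsub : {x : ℝ | a ≤ |x|} ⊆ Ici a ∪ Iic (-a) := by
    intro x hx
    simp only [Set.mem_setOf_eq] at hx
    rcases abs_cases x with ⟨h1, _⟩ | ⟨h1, _⟩
    · left; exact h1 ▸ hx
    · right; simp only [Set.mem_Iic]; linarith [hx.trans_eq h1]
  have hmap : (gaussianReal 0 v).map (fun x : ℝ => -1 * x) = gaussianReal 0 v := by
    rw [show (fun x : ℝ => -1 * x) = (((-1 : ℝ)) * ·) from rfl, gaussianReal_map_const_mul]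
    norm_num
  have hIic : gaussianReal 0 v (Iic (-a)) = gaussianReal 0 v (Ici a) := by
    conv_lhs => rw [← hmap]
    rw [Measure.map_apply (measurable_const_mul (-1) : Measurable fun x : ℝ => -1 * x) measurableSet_Iic]
    congr 1
    ext x
    simp only [Set.mem_preimage, Set.mem_Iic, Set.mem_Ici]
    constructor <;> intro h <;> linarith
  calc gaussianReal 0 v {x | a ≤ |x|} ≤ gaussianReal 0 v (Ici a ∪ Iic (-a)) :=
        measure_mono hsub
    _ ≤ gaussianReal 0 v (Ici a) + gaussianReal 0 v (Iic (-a)) := measure_union_le _ _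
    _ = gaussianReal 0 v (Ici a) + gaussianReal 0 v (Ici a) := by rw [hIic]
    _ ≤ ENNReal.ofReal (rexp (-a ^ 2 / (2 * v))) + ENNReal.ofReal (rexp (-a ^ 2 / (2 * v))) :=
        add_le_add (gauss_Ici_le hv ha) (gauss_Ici_le hv ha)
    _ = 2 * ENNReal.ofReal (rexp (-a ^ 2 / (2 * v))) := by ring

/-- Let `B 0, …, B (n-1)` be independent standard Brownian motions on `[0,1]` started
at `0` (characterized by continuous paths, Gaussian increments, and independent
increments). Then almost surely the countable class
`𝒞_Q = {C_{t,y} : t, y ∈ ℚ, 0 ≤ t ≤ 1}`, with `C_{t,y} = {z : z(t) ≤ y}`, shatters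
`{B 1, …, B n}`: every subset of the paths can be picked out, i.e.
`card {C ∩ {B₁,…,B_n} : C ∈ 𝒞_Q} = 2^n`. -/
theorem stmt_13 {Ω : Type*} [MeasurableSpace Ω] (P : Measure Ω) [IsProbabilityMeasure P]
    (n : ℕ) (hn : 1 ≤ n) (B : Fin n → Ω → ℝ → ℝ)
    (hmeas : ∀ i t, Measurable fun ω => B i ω t)
    (hcont : ∀ i ω, ContinuousOn (B i ω) (Set.Icc 0 1))
    (hzero : ∀ i ω, B i ω 0 = 0)
    (hgauss : ∀ i, ∀ s t : ℝ, 0 ≤ s → s ≤ t → t ≤ 1 →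
      Measure.map (fun ω => B i ω t - B i ω s) P = gaussianReal 0 (Real.toNNReal (t - s)))
    (hincr : ∀ i, ∀ a b c d : ℝ, 0 ≤ a → a ≤ b → b ≤ c → c ≤ d → d ≤ 1 →
      IndepFun (fun ω => B i ω b - B i ω a) (fun ω => B i ω d - B i ω c) P)
    (hindep : iIndepFun
      (fun i ω => B i ω) P) :
    ∀ᵐ ω ∂P, ∀ S : Finset (Fin n), ∃ t y : ℚ,
      0 ≤ (t : ℝ) ∧ (t : ℝ) ≤ 1 ∧ ∀ i : Fin n, (B i ω t ≤ (y : ℝ) ↔ i ∈ S) := by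
  rw [ae_all_iff]
  intro S
  -- basic constants
  have hnR : (1:ℝ) ≤ (n:ℝ) := by exact_mod_cast hn
  set c : ℕ := 32 * n with hcdef
  have hcR : (32:ℝ) ≤ (c:ℝ) := by
    have : (32:ℕ) ≤ c := by omega
    exact_mod_cast this
  have hcpos : (0:ℝ) < (c:ℝ) := by linarith
  have hc1 : (1:ℝ) < (c:ℝ) := by linarith
  -- the sequence of times
  set t : ℕ → ℝ := fun k => ((c:ℝ))⁻¹ ^ k with htdef
  have hinv0 : (0:ℝ) ≤ (c:ℝ)⁻¹ := by positivity
  have hinv1 : ((c:ℝ))⁻¹ ≤ 1 := by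
    rw [inv_le_one_iff₀]; right; linarith
  have htpos : ∀ k, 0 < t k := fun k => pow_pos (by positivity) k
  have htle1 : ∀ k, t k ≤ 1 := fun k => pow_le_one₀ hinv0 hinv1
  have htmono : ∀ k l, k ≤ l → t l ≤ t k := fun k l h =>
    pow_le_pow_of_le_one hinv0 hinv1 h
  have htsucc : ∀ k, t (k+1) = t k / c := by
    intro k
    show ((c:ℝ))⁻¹ ^ (k+1) = ((c:ℝ))⁻¹ ^ k / c
    rw [pow_succ, div_eq_mul_inv]
  have hwval : ∀ k, t k - t (k+1) = t k * ((c:ℝ) - 1) / c := by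
    intro k; rw [htsucc k]; field_simp
  have hwpos : ∀ k, 0 < t k - t (k+1) := by
    intro k; rw [hwval]
    have h0 := htpos k
    have h1 : (0:ℝ) < (c:ℝ) - 1 := by linarith
    positivity
  -- signs
  set ε : Fin n → ℝ := fun i => if i ∈ S then (-1:ℝ) else 1 with hεdef
  have hε1 : ∀ i, ε i = 1 ∨ ε i = -1 := by
    intro i; by_cases h : i ∈ S <;> simp [hεdef, h]
  -- thresholds
  set sk : ℕ → ℝ := fun k => Real.sqrt (t (k+1) * (4 * Real.log ((k:ℝ)+2))) with hskdef
  have hlogpos : ∀ k : ℕ, 0 < Real.log ((k:ℝ)+2) := by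
    intro k
    apply Real.log_pos
    have : (0:ℝ) ≤ (k:ℝ) := Nat.cast_nonneg k
    linarith
  have hsknn : ∀ k, 0 ≤ sk k := fun k => Real.sqrt_nonneg _
  have hsksq : ∀ k, sk k ^ 2 = t (k+1) * (4 * Real.log ((k:ℝ)+2)) := by
    intro k
    rw [hskdef]
    exact Real.sq_sqrt (mul_nonneg (htpos (k+1)).le
      (mul_nonneg (by norm_num) (hlogpos k).le))
  -- increments with signs
  set Y : ℕ → Fin n → Ω → ℝ := fun k i ω => ε i * (B i ω (t k) - B i ω (t (k+1))) with hYdef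
  have hYmeas : ∀ k i, Measurable (Y k i) := fun k i =>
    ((hmeas i (t k)).sub (hmeas i (t (k+1)))).const_mul _
  set A : ℕ → Set Ω := fun k => ⋂ i, Y k i ⁻¹' Ioi (2 * sk k) with hAdef
  have hAmeas : ∀ k, MeasurableSet (A k) :=
    fun k => MeasurableSet.iInter fun i => (hYmeas k i) measurableSet_Ioi
  set Bad : ℕ → Set Ω := fun k => ⋃ i, {ω | sk k ≤ |B i ω (t (k+1))|} with hBdef
  have hBadmeas : ∀ k, MeasurableSet (Bad k) :=
    fun k => MeasurableSet.iUnion fun i =>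
      measurableSet_le measurable_const (hmeas i _).abs
  -- laws
  have hlawD : ∀ k i, Measure.map (Y k i) P
      = gaussianReal 0 (Real.toNNReal (t k - t (k+1))) := by
    intro k i
    have h0 : Measure.map (fun ω => B i ω (t k) - B i ω (t (k+1))) P
        = gaussianReal 0 (Real.toNNReal (t k - t (k+1))) :=
      hgauss i (t (k+1)) (t k) (htpos _).le (htmono k (k+1) (Nat.le_succ k)) (htle1 k)
    have hcomp : Y k i = (fun x => ε i * x) ∘ (fun ω => B i ω (t k) - B i ω (t (k+1))) := rfl
    rw [hcomp, ← Measure.map_map (f := fun ω => B i ω (t k) - B i ω (t (k+1))) (measurable_const_mul (ε i))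
      ((hmeas i _).sub (hmeas i _)), h0]
    rw [show (fun x : ℝ => ε i * x) = ((ε i) * ·) from rfl, gaussianReal_map_const_mul]
    rcases hε1 i with h | h <;> rw [h] <;> norm_num
  have hlawB : ∀ k i, Measure.map (fun ω => B i ω (t (k+1))) P
      = gaussianReal 0 (Real.toNNReal (t (k+1))) := by
    intro k i
    have h := hgauss i 0 (t (k+1)) le_rfl (htpos _).le (htle1 _)
    simpa [hzero] using h
  have hvD : ∀ k, ((Real.toNNReal (t k - t (k+1)) : ℝ≥0) : ℝ) = t k - t (k+1) :=
    fun k => Real.coe_toNNReal _ (hwpos k).le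
  have hvDne : ∀ k, Real.toNNReal (t k - t (k+1)) ≠ 0 :=
    fun k => (Real.toNNReal_pos.2 (hwpos k)).ne'
  have hvB : ∀ k, ((Real.toNNReal (t (k+1)) : ℝ≥0) : ℝ) = t (k+1) :=
    fun k => Real.coe_toNNReal _ (htpos _).le
  have hvBne : ∀ k, Real.toNNReal (t (k+1)) ≠ 0 :=
    fun k => (Real.toNNReal_pos.2 (htpos _)).ne'
  -- tail bound preparations
  have hl2 : (0.6931471803 : ℝ) < Real.log 2 := Real.log_two_gt_d9
  have hlk : ∀ k : ℕ, Real.log 2 ≤ Real.log ((k:ℝ)+2) := by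
    intro k
    apply Real.log_le_log (by norm_num)
    have : (0:ℝ) ≤ (k:ℝ) := Nat.cast_nonneg k
    linarith
  have hskge : ∀ k, Real.sqrt ((Real.toNNReal (t (k+1)) : ℝ≥0) : ℝ) ≤ sk k := by
    intro k
    rw [hvB k]
    apply Real.sqrt_le_sqrt
    nlinarith [htpos (k+1), hl2, hlk k]
  have hexpBad : ∀ k : ℕ, rexp (-(sk k) ^ 2 / (2 * ((Real.toNNReal (t (k+1)) : ℝ≥0) : ℝ)))
      = (((k:ℝ)+2)^2)⁻¹ := by
    intro k
    rw [hvB k, hsksq k]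
    have ht := (htpos (k+1)).ne'
    rw [show -(t (k+1) * (4 * Real.log ((k:ℝ)+2))) / (2 * t (k+1))
      = -(2 * Real.log ((k:ℝ)+2)) by field_simp; ring]
    rw [show (2:ℝ) * Real.log ((k:ℝ)+2) = Real.log (((k:ℝ)+2)^2) by
      rw [Real.log_pow]; push_cast; ring]
    rw [Real.exp_neg, Real.exp_log (by positivity)]
  have hBadle : ∀ k, P (Bad k)
      ≤ (2 * (n:ℝ≥0∞)) * ENNReal.ofReal ((((k:ℝ)+2)^2)⁻¹) := by
    intro k
    have hterm : ∀ i : Fin n, P {ω | sk k ≤ |B i ω (t (k+1))|}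
        ≤ 2 * ENNReal.ofReal ((((k:ℝ)+2)^2)⁻¹) := by
      intro i
      have hE : MeasurableSet {x : ℝ | sk k ≤ |x|} :=
        measurableSet_le measurable_const measurable_id.abs
      have hset : {ω | sk k ≤ |B i ω (t (k+1))|}
          = (fun ω => B i ω (t (k+1))) ⁻¹' {x | sk k ≤ |x|} := rfl
      rw [hset, ← Measure.map_apply (hmeas i _) hE, hlawB k i]
      have := gauss_abs_le (hvBne k) (hskge k)
      rwa [hexpBad k] at this
    calc P (Bad k) ≤ ∑ i : Fin n, P {ω | sk k ≤ |B i ω (t (k+1))|} :=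
          measure_iUnion_fintype_le _ _
      _ ≤ ∑ _i : Fin n, 2 * ENNReal.ofReal ((((k:ℝ)+2)^2)⁻¹) :=
          Finset.sum_le_sum fun i _ => hterm i
      _ = (2 * (n:ℝ≥0∞)) * ENNReal.ofReal ((((k:ℝ)+2)^2)⁻¹) := by
          rw [Finset.sum_const, Finset.card_univ, Fintype.card_fin, nsmul_eq_mul]
          ring
  have hsummable : Summable (fun k : ℕ => (((k:ℝ)+2)^2)⁻¹) := by
    have h0 : Summable (fun k : ℕ => ((k:ℝ)^2)⁻¹) := by
      simpa [one_div] using Real.summable_one_div_nat_pow.2 one_lt_two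
    have h1 := (summable_nat_add_iff 2).2 h0
    refine h1.congr fun k => ?_
    push_cast
    ring_nf
  have hBadsum : (∑' k, P (Bad k)) ≠ ∞ := by
    refine ne_top_of_le_ne_top ?_ (ENNReal.tsum_le_tsum hBadle)
    rw [ENNReal.tsum_mul_left, ← ENNReal.ofReal_tsum_of_nonneg
      (fun k => by positivity) hsummable]
    exact ENNReal.mul_ne_top (ENNReal.mul_ne_top (by norm_num) (ENNReal.natCast_ne_top n)) ENNReal.ofReal_ne_top
  -- lower bound for P (A k)
  set q : ℕ → ℝ := fun k => (Real.sqrt (2*π))⁻¹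
      * rexp (-(2 * sk k + Real.sqrt ((Real.toNNReal (t k - t (k+1)) : ℝ≥0) : ℝ))^2
          / (2 * ((Real.toNNReal (t k - t (k+1)) : ℝ≥0) : ℝ))) with hqdef
  have hqpos : ∀ k, 0 < q k := by
    intro k; rw [hqdef]; positivity
  have hqfac : ∀ k (i : Fin n), ENNReal.ofReal (q k) ≤ P (Y k i ⁻¹' Ioi (2 * sk k)) := by
    intro k i
    rw [← Measure.map_apply (hYmeas k i) measurableSet_Ioi, hlawD k i]
    exact gauss_Ioi_ge (hvDne k) (by positivity)
  have hPAprod : ∀ k, P (A k) = ∏ i : Fin n, P (Y k i ⁻¹' Ioi (2 * sk k)) := by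
    intro k
    have hYind : iIndepFun (Y k) P := by
      have hg : ∀ i : Fin n, Measurable (fun f : ℝ → ℝ => ε i * (f (t k) - f (t (k+1)))) :=
        fun i => ((measurable_pi_apply (t k)).sub (measurable_pi_apply (t (k+1)))).const_mul _
      exact hindep.comp _ hg
    have h := hYind.measure_inter_preimage_eq_mul Finset.univ
      (sets := fun _ => Ioi (2 * sk k)) (fun i _ => measurableSet_Ioi)
    rw [← h]
    congr 1
    simp [hAdef]
  have hPA : ∀ k, ENNReal.ofReal (q k ^ n) ≤ P (A k) := by
    intro k
    rw [hPAprod k]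
    calc ENNReal.ofReal (q k ^ n) = (ENNReal.ofReal (q k))^n := by
          rw [ENNReal.ofReal_pow (hqpos k).le]
      _ = ∏ _i : Fin n, ENNReal.ofReal (q k) := by
          rw [Finset.prod_const, Finset.card_univ, Fintype.card_fin]
      _ ≤ ∏ i : Fin n, P (Y k i ⁻¹' Ioi (2 * sk k)) :=
          Finset.prod_le_prod' (fun i _ => hqfac k i)
  have hqlow : ∀ k : ℕ,
      ((Real.sqrt (2*π))⁻¹ * rexp (-1))^n * (((k:ℝ)+2))⁻¹ ≤ q k ^ n := by
    intro k
    have hnpos : (0:ℝ) < n := by linarith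
    set L := Real.log ((k:ℝ)+2) with hLdef
    have hL0 : 0 < L := hlogpos k
    set w := t k - t (k+1) with hwdef
    have hw0 : 0 < w := hwpos k
    have hsw : Real.sqrt w ^ 2 = w := Real.sq_sqrt hw0.le
    have hs2 : (sk k)^2 = (t k / c) * (4*L) := by
      rw [hsksq k, htsucc k]
    have hwv : w = t k * ((c:ℝ) - 1) / c := hwval k
    have hβ : (2 * sk k + Real.sqrt w)^2 / (2*w) ≤ L / n + 1 := by
      have h1 : (2 * sk k + Real.sqrt w)^2 ≤ 8*(sk k)^2 + 2*w := by
        nlinarith [hsw, Real.sqrt_nonneg w, hsknn k, sq_nonneg (2 * sk k - Real.sqrt w)]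
      have h2 : (8*(sk k)^2 + 2*w) / (2*w) ≤ L / n + 1 := by
        rw [div_le_iff₀ (by positivity)]
        have htk := htpos k
        have hcn : (16:ℝ) * n ≤ (c:ℝ) - 1 := by
          have : ((32:ℝ) * n) = (c:ℝ) := by rw [hcdef]; push_cast; ring
          nlinarith
        have h8 : 8*(sk k)^2 = 32 * L * t k / c := by rw [hs2]; ring
        rw [h8, hwv]
        rw [div_add' _ _ _ hnpos.ne', div_mul_eq_mul_div, le_div_iff₀ hnpos]
        have hexp : (L + 1 * n) * (2 * (t k * ((c:ℝ) - 1) / ↑c)) - (32 * L * t k / ↑c + 2 * (t k * ((c:ℝ) - 1) / ↑c)) * n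
            = (2 * t k / c) * (L * (((c:ℝ) - 1) - 16 * n)) := by
          field_simp
          ring
        nlinarith [mul_pos (mul_pos (by norm_num : (0:ℝ) < 2) htk) hL0, hexp,
          mul_nonneg (mul_nonneg (by positivity : (0:ℝ) ≤ 2 * t k / c) hL0.le)
            (by linarith : (0:ℝ) ≤ ((c:ℝ) - 1) - 16 * n)]
      calc (2 * sk k + Real.sqrt w)^2 / (2*w) ≤ (8*(sk k)^2 + 2*w) / (2*w) := by
            apply div_le_div_of_nonneg_right h1 (by positivity) |>.trans_eq rfl
        _ ≤ L / n + 1 := h2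
    have hq1 : (Real.sqrt (2*π))⁻¹ * rexp (-(L / n + 1)) ≤ q k := by
      rw [hqdef]
      simp only []
      refine mul_le_mul_of_nonneg_left ?_ (by positivity)
      rw [Real.exp_le_exp]
      rw [hvD k, ← hwdef]
      rw [neg_div]
      linarith [hβ]
    calc ((Real.sqrt (2*π))⁻¹ * rexp (-1))^n * (((k:ℝ)+2))⁻¹
        = ((Real.sqrt (2*π))⁻¹)^n * (rexp (-(L / n + 1)))^n := by
          rw [← Real.exp_nat_mul]
          rw [show (n:ℝ) * (-(L / n + 1)) = -L - n by field_simp; ring]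
          rw [mul_pow]
          rw [show rexp (-L - (n:ℝ)) = rexp (-L) * rexp (-(1:ℝ)) ^ n by
            rw [← Real.exp_nat_mul, ← Real.exp_add]; ring_nf]
          rw [show rexp (-L) = (((k:ℝ)+2))⁻¹ by
            rw [Real.exp_neg, hLdef, Real.exp_log (by positivity)]]
          ring
      _ = ((Real.sqrt (2*π))⁻¹ * rexp (-(L / n + 1)))^n := by rw [mul_pow]
      _ ≤ q k ^ n := pow_le_pow_left₀ (by positivity) hq1 n
  have hAsum : (∑' k, P (A k)) = ∞ := by
    by_contra h
    have h1 : Summable (fun k => (P (A k)).toReal) := ENNReal.summable_toReal h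
    have h2 : Summable (fun k : ℕ =>
        ((Real.sqrt (2*π))⁻¹ * rexp (-1))^n * (((k:ℝ)+2))⁻¹) := by
      refine Summable.of_nonneg_of_le (fun k => by positivity) (fun k => ?_) h1
      refine (hqlow k).trans ?_
      have := hPA k
      rw [ENNReal.ofReal_le_iff_le_toReal (measure_ne_top _ _)] at this
      exact this
    have hC : (0:ℝ) < ((Real.sqrt (2*π))⁻¹ * rexp (-1))^n := by positivity
    have h3 : Summable (fun k : ℕ => (((k:ℝ)+2))⁻¹) :=
      (summable_mul_left_iff hC.ne').1 h2
    have h4 : Summable (fun k : ℕ => (((k+2:ℕ) : ℝ))⁻¹) := by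
      refine h3.congr fun k => ?_
      push_cast
      ring
    have h5 : Summable (fun k : ℕ => ((k:ℝ))⁻¹) := (summable_nat_add_iff 2).1 h4
    exact Real.not_summable_natCast_inv h5
  -- pairwise independence of the events A k
  have hpairind : Pairwise fun k l => IndepFun ((A k).indicator fun _ => (1:ℝ))
      ((A l).indicator fun _ => (1:ℝ)) P := by
    have hord : ∀ k l, k < l → IndepFun ((A k).indicator fun _ => (1:ℝ))
        ((A l).indicator fun _ => (1:ℝ)) P := by
      intro k l hkl
      have hpairs : iIndepFun
          (fun i ω => (Y k i ω, Y l i ω)) P := by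
        have hg : ∀ i : Fin n, Measurable (fun f : ℝ → ℝ =>
            (ε i * (f (t k) - f (t (k+1))), ε i * (f (t l) - f (t (l+1))))) := by
          intro i
          have hev : ∀ x : ℝ, Measurable fun f : ℝ → ℝ => f x := fun x => measurable_pi_apply x
          refine Measurable.prodMk ?_ ?_
          · exact ((hev (t k)).sub (hev (t (k+1)))).const_mul (ε i)
          · exact ((hev (t l)).sub (hev (t (l+1)))).const_mul (ε i)
        exact hindep.comp _ hg
      have hYZ : ∀ i, IndepFun (Y k i) (Y l i) P := by
        intro i
        have hbase := hincr i (t (l+1)) (t l) (t (k+1)) (t k)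
          (htpos _).le (htmono l (l+1) (Nat.le_succ l)) (htmono (k+1) l hkl)
          (htmono k (k+1) (Nat.le_succ k)) (htle1 k)
        exact (hbase.symm).comp (measurable_const_mul (ε i)) (measurable_const_mul (ε i))
      exact indepFun_indicator_inter P (hYmeas k) (hYmeas l) hpairs hYZ (2 * sk k) (2 * sk l)
    intro k l hkl
    rcases lt_or_gt_of_ne hkl with h | h
    · exact hord k l h
    · exact (hord l k h).symm
  -- Borel--Cantelli
  have hBC2 : P (Filter.limsup A Filter.atTop) = 1 := bc2_pairwise P hAmeas hpairind hAsum
  have hBC1 : P (Filter.limsup Bad Filter.atTop) = 0 := measure_limsup_atTop_eq_zero hBadsum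
  have hmlimA : MeasurableSet (Filter.limsup A Filter.atTop) := by
    rw [limsup_eq_iInf_iSup_of_nat']
    simp only [Set.iInf_eq_iInter, Set.iSup_eq_iUnion]
    exact MeasurableSet.iInter fun m => MeasurableSet.iUnion fun k => hAmeas _
  have hae1 : ∀ᵐ ω ∂P, ω ∈ Filter.limsup A Filter.atTop := by
    rw [ae_iff]
    have heq : {ω | ¬ ω ∈ Filter.limsup A Filter.atTop} = (Filter.limsup A Filter.atTop)ᶜ := rfl
    rw [heq, measure_compl hmlimA (measure_ne_top _ _), hBC2]
    simp
  have hae2 : ∀ᵐ ω ∂P, ω ∉ Filter.limsup Bad Filter.atTop := measure_eq_zero_iff_ae_notMem.1 hBC1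
  filter_upwards [hae1, hae2] with ω hω1 hω2
  rw [mem_limsup_iff_frequently_mem] at hω1
  rw [mem_limsup_iff_frequently_mem, Filter.not_frequently] at hω2
  obtain ⟨k, hk1, hk2⟩ := (hω1.and_eventually hω2).exists
  have hcast : ((1/(c:ℚ)^k : ℚ) : ℝ) = t k := by
    rw [htdef]
    push_cast
    rw [one_div, ← inv_pow]
  refine ⟨1/(c:ℚ)^k, 0, ?_, ?_, ?_⟩
  · rw [hcast]; exact (htpos k).le
  · rw [hcast]; exact htle1 k
  · intro i
    rw [hcast]
    have hYk : 2 * sk k < ε i * (B i ω (t k) - B i ω (t (k+1))) := Set.mem_iInter.1 hk1 i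
    have hBadk : |B i ω (t (k+1))| < sk k := by
      by_contra hcon
      exact hk2 (Set.mem_iUnion.2 ⟨i, not_lt.1 hcon⟩)
    obtain ⟨hb1, hb2⟩ := abs_lt.1 hBadk
    rw [Rat.cast_zero]
    by_cases hiS : i ∈ S
    · simp only [hiS, iff_true]
      have hεi : ε i = -1 := by simp [hεdef, hiS]
      rw [hεi] at hYk
      nlinarith [hsknn k]
    · simp only [hiS, iff_false, not_le]
      have hεi : ε i = 1 := by simp [hεdef, hiS]
      rw [hεi] at hYk
      nlinarith [hsknn k]
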